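/- In the fair division instance with 3 agents and 4 goods where agent 1 values the goods (1.4, 2.2, 2.2, 2.2) and agents 2 and 3 each value them (5, 1, 1, 1), every EQ1 allocation assigns exactly one good to agent 1. -/

import Mathlib

open Finset

/-- An allocation is a partition of the goods among the agents. -/
def isPartition {ι γ : Type*} [Fintype ι] [Fintype γ] [DecidableEq γ]
    (A : ι → Finset γ) : Prop :=
  (∀ i j, i ≠ j → Disjoint (A i) (A j)) ∧ Finset.univ.biUnion A = Finset.univ

/-- Additive value of a bundle. -/
def bundleVal {γ : Type*} (v : γ → ℚ) (S : Finset γ) : ℚ := ∑ g ∈ S, v g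

/-- EQ1: for every pair of agents `i, j` with `A i` nonempty, some good can be
removed from `A i` so that `i`'s value drops to at most `j`'s value. -/
def EQ1 {ι γ : Type*} [DecidableEq γ] (v : ι → γ → ℚ) (A : ι → Finset γ) : Prop :=
  ∀ i j, A i ≠ ∅ → ∃ g ∈ A i, bundleVal (v i) ((A i).erase g) ≤ bundleVal (v j) (A j)

/-- The instance of Theorem 3.1 (Fig. 1). -/
def vFig1 : Fin 3 → Fin 4 → ℚ :=
  ![![7/5, 11/5, 11/5, 11/5], ![5, 1, 1, 1], ![5, 1, 1, 1]]

/-- Integer version of `vFig1` (scaled by 5). -/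
def w : Fin 3 → Fin 4 → ℤ := ![![7,11,11,11],![25,5,5,5],![25,5,5,5]]

set_option maxRecDepth 10000 in
lemma key : ∀ a b c d : Fin 3,
    (∀ i j : Fin 3, Finset.univ.filter (fun g => ![a,b,c,d] g = i) ≠ ∅ →
      ∃ g ∈ Finset.univ.filter (fun g => ![a,b,c,d] g = i),
        ∑ x ∈ (Finset.univ.filter (fun g => ![a,b,c,d] g = i)).erase g, w i x ≤
          ∑ x ∈ Finset.univ.filter (fun g => ![a,b,c,d] g = j), w j x) →
    (Finset.univ.filter (fun g => ![a,b,c,d] g = 0)).card = 1 := by decide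

lemma hval : ∀ i g, (w i g : ℚ) = 5 * vFig1 i g := by
  intro i g; fin_cases i <;> fin_cases g <;> norm_num [w, vFig1]

lemma bridge (i : Fin 3) (S : Finset (Fin 4)) :
    ((∑ x ∈ S, w i x : ℤ) : ℚ) = 5 * bundleVal (vFig1 i) S := by
  rw [bundleVal, Finset.mul_sum]
  push_cast
  exact Finset.sum_congr rfl fun g _ => hval i g

/-- in the instance of Fig. 1, every EQ1 allocation assigns
exactly one good to agent 1. -/
theorem stmt0 (A : Fin 3 → Finset (Fin 4)) (hpart : isPartition A)
    (heq1 : EQ1 vFig1 A) : (A 0).card = 1 := by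
  obtain ⟨hdisj, hcov⟩ := hpart
  have hex : ∀ g : Fin 4, ∃ i, g ∈ A i := by
    intro g
    have : g ∈ Finset.univ.biUnion A := by rw [hcov]; exact mem_univ g
    simpa using this
  choose f hf using hex
  have hfeq : f = ![f 0, f 1, f 2, f 3] := by
    funext g; fin_cases g <;> rfl
  have hAi : ∀ i, A i = Finset.univ.filter (fun g => ![f 0, f 1, f 2, f 3] g = i) := by
    intro i
    ext g
    rw [← hfeq]
    simp only [mem_filter, mem_univ, true_and]
    constructor
    · intro hg
      by_contra hne
      have := (hdisj _ _ hne).le_bot (mem_inter.mpr ⟨hf g, hg⟩)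
      simp at this
    · intro h; rw [← h]; exact hf g
  rw [hAi 0]
  refine key (f 0) (f 1) (f 2) (f 3) ?_
  intro i j hne
  obtain ⟨g, hg, hle⟩ := heq1 i j (by rw [hAi i]; exact hne)
  refine ⟨g, by rw [← hAi i]; exact hg, ?_⟩
  rw [← @Int.cast_le ℚ, bridge, bridge, ← hAi i, ← hAi j]
  have : (0:ℚ) < 5 := by norm_num
  exact (mul_le_mul_iff_right₀ this).mpr hle
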